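/- arXiv:2205.00519 — 8 statements merged into one kernel-verified Lean document; each statement's English description precedes it below -/
import Mathlib

section
/- Let n be a positive integer, T ≥ 0 and δ ≥ 0. Let H, H' : ℝ → Matrix (Fin n) (Fin n) ℂ be time-dependent Hamiltonians (H(t) and H'(t) Hermitian for every t ∈ [0,T]) and let ψ, ψ' : ℝ → EuclideanSpace ℂ (Fin n) solve the Schrödinger equation for H and H' respectively on [0,T], with ψ(0) = ψ'(0) and ‖ψ(0)‖ = 1. If ‖H(t) − H'(t)‖ ≤ δ (spectral norm) for all t ∈ [0,T], then ‖ψ(T) − ψ'(T)‖ ≤ √(2 T δ). -/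
open scoped Matrix.Norms.L2Operator InnerProductSpace


noncomputable def mv {n : ℕ} (A : Matrix (Fin n) (Fin n) ℂ) (x : EuclideanSpace ℂ (Fin n)) :
    EuclideanSpace ℂ (Fin n) := WithLp.toLp 2 (A.mulVec x)

lemma herm_symm {n : ℕ} {A : Matrix (Fin n) (Fin n) ℂ} (hA : A.IsHermitian)
    (x y : EuclideanSpace ℂ (Fin n)) : ⟪mv A x, y⟫_ℂ = ⟪x, mv A y⟫_ℂ :=
  (Matrix.isHermitian_iff_isSymmetric.1 hA) x y

lemma mv_sub {n : ℕ} (A B : Matrix (Fin n) (Fin n) ℂ) (x : EuclideanSpace ℂ (Fin n)) :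
    mv (A - B) x = mv A x - mv B x := by
  simp only [mv, Matrix.sub_mulVec, WithLp.toLp_sub]

lemma herm_im_zero {n : ℕ} {A : Matrix (Fin n) (Fin n) ℂ} (hA : A.IsHermitian)
    (x : EuclideanSpace ℂ (Fin n)) : (⟪x, mv A x⟫_ℂ).im = 0 := by
  have h2 : (starRingEnd ℂ) ⟪x, mv A x⟫_ℂ = ⟪x, mv A x⟫_ℂ := by
    rw [inner_conj_symm]; exact herm_symm hA x x
  exact Complex.conj_eq_iff_im.mp h2

lemma deriv_identity {n : ℕ} {A B : Matrix (Fin n) (Fin n) ℂ}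
    (hA : A.IsHermitian) (hB : B.IsHermitian) (a b : EuclideanSpace ℂ (Fin n)) :
    Complex.re (⟪a - b, (-Complex.I) • mv A a - (-Complex.I) • mv B b⟫_ℂ
      + ⟪(-Complex.I) • mv A a - (-Complex.I) • mv B b, a - b⟫_ℂ)
    = 2 * Complex.re ⟪a, (-Complex.I) • mv (A - B) b⟫_ℂ := by
  have hba : ⟪b, mv A a⟫_ℂ = (starRingEnd ℂ) ⟪a, mv A b⟫_ℂ := by
    rw [inner_conj_symm]; exact (herm_symm hA b a).symm
  have h1 := herm_im_zero hA a
  have h2 := herm_im_zero hB b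
  have e1 : ⟪mv A a, a⟫_ℂ = (starRingEnd ℂ) ⟪a, mv A a⟫_ℂ := (inner_conj_symm (mv A a) a).symm
  have e2 : ⟪mv B b, b⟫_ℂ = (starRingEnd ℂ) ⟪b, mv B b⟫_ℂ := (inner_conj_symm (mv B b) b).symm
  have e3 : ⟪mv B b, a⟫_ℂ = (starRingEnd ℂ) ⟪a, mv B b⟫_ℂ := (inner_conj_symm (mv B b) a).symm
  have e4 : ⟪mv A a, b⟫_ℂ = (starRingEnd ℂ) ⟪b, mv A a⟫_ℂ := (inner_conj_symm (mv A a) b).symm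
  simp only [inner_sub_left, inner_sub_right, inner_smul_left, inner_smul_right, mv_sub,
    map_neg, Complex.conj_I, e1, e2, e3, e4, hba]
  simp only [Complex.add_re, Complex.sub_re, Complex.neg_re, Complex.mul_re, Complex.mul_im,
    Complex.I_re, Complex.I_im, Complex.neg_im, Complex.sub_im, Complex.add_im,
    Complex.conj_re, Complex.conj_im]
  ring_nf
  linarith

lemma mv_norm {n : ℕ} (A : Matrix (Fin n) (Fin n) ℂ) (x : EuclideanSpace ℂ (Fin n)) :
    ‖mv A x‖ ≤ ‖A‖ * ‖x‖ := A.l2_opNorm_mulVec x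

lemma norm_conserved {n : ℕ} {T : ℝ} (H : ℝ → Matrix (Fin n) (Fin n) ℂ)
    (hH : ∀ t ∈ Set.Icc (0:ℝ) T, (H t).IsHermitian)
    (ψ : ℝ → EuclideanSpace ℂ (Fin n))
    (hψ : ∀ t ∈ Set.Icc (0:ℝ) T, HasDerivAt ψ ((-Complex.I) • mv (H t) (ψ t)) t) :
    ∀ t ∈ Set.Icc (0:ℝ) T, ‖ψ t‖ = ‖ψ 0‖ := by
  have key : ∀ s ∈ Set.Icc (0:ℝ) T,
      Complex.re ⟪ψ s, ψ s⟫_ℂ = Complex.re ⟪ψ 0, ψ 0⟫_ℂ := by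
    apply constant_of_has_deriv_right_zero
    · have hc : ContinuousOn ψ (Set.Icc 0 T) := fun s hs =>
        (hψ s hs).continuousAt.continuousWithinAt
      exact Complex.continuous_re.comp_continuousOn (hc.inner hc)
    · intro s hs
      have hs' := Set.Ico_subset_Icc_self hs
      have hd := (hψ s hs').inner ℂ (hψ s hs')
      have hzero : ⟪ψ s, (-Complex.I) • mv (H s) (ψ s)⟫_ℂ
          + ⟪(-Complex.I) • mv (H s) (ψ s), ψ s⟫_ℂ = 0 := by
        rw [inner_smul_right, inner_smul_left, herm_symm (hH s hs')]
        simp [Complex.conj_I]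
      rw [hzero] at hd
      have hre := Complex.reCLM.hasFDerivAt.comp_hasDerivAt s hd
      rw [map_zero] at hre
      exact hre.hasDerivWithinAt
  intro t ht
  have h := key t ht
  have h1 : ‖ψ t‖ ^ 2 = ‖ψ 0‖ ^ 2 := by
    rw [← inner_self_eq_norm_sq (𝕜 := ℂ), ← inner_self_eq_norm_sq (𝕜 := ℂ)]
    exact h
  nlinarith [norm_nonneg (ψ t), norm_nonneg (ψ 0)]

/-- If two time-dependent Hamiltonians stay within spectral distance `δ` of each other on
`[0, T]`, then the solutions of the corresponding Schrödinger equations, starting from the same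
normalized initial state, stay within `√(2 T δ)` of each other at time `T`. -/
theorem schrodinger_evolution_deviation_bound
    (n : ℕ) (hn : 0 < n) (T δ : ℝ) (hT : 0 ≤ T) (hδ : 0 ≤ δ)
    (H H' : ℝ → Matrix (Fin n) (Fin n) ℂ)
    (hH : ∀ t ∈ Set.Icc (0 : ℝ) T, (H t).IsHermitian)
    (hH' : ∀ t ∈ Set.Icc (0 : ℝ) T, (H' t).IsHermitian)
    (ψ ψ' : ℝ → EuclideanSpace ℂ (Fin n))
    (hψ : ∀ t ∈ Set.Icc (0 : ℝ) T,
      HasDerivAt ψ ((-Complex.I) • (WithLp.toLp 2 ((H t).mulVec (ψ t)) : EuclideanSpace ℂ (Fin n))) t)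
    (hψ' : ∀ t ∈ Set.Icc (0 : ℝ) T,
      HasDerivAt ψ' ((-Complex.I) • (WithLp.toLp 2 ((H' t).mulVec (ψ' t)) : EuclideanSpace ℂ (Fin n))) t)
    (h0 : ψ 0 = ψ' 0) (hnorm : ‖ψ 0‖ = 1)
    (hclose : ∀ t ∈ Set.Icc (0 : ℝ) T, ‖H t - H' t‖ ≤ δ) :
    ‖ψ T - ψ' T‖ ≤ Real.sqrt (2 * T * δ) := by
  -- reinterpret derivatives with `mv`
  have hψm : ∀ t ∈ Set.Icc (0:ℝ) T, HasDerivAt ψ ((-Complex.I) • mv (H t) (ψ t)) t :=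
    fun t ht => hψ t ht
  have hψ'm : ∀ t ∈ Set.Icc (0:ℝ) T, HasDerivAt ψ' ((-Complex.I) • mv (H' t) (ψ' t)) t :=
    fun t ht => hψ' t ht
  have hcons : ∀ t ∈ Set.Icc (0:ℝ) T, ‖ψ t‖ = 1 := fun t ht =>
    (norm_conserved H hH ψ hψm t ht).trans hnorm
  have hcons' : ∀ t ∈ Set.Icc (0:ℝ) T, ‖ψ' t‖ = 1 := fun t ht =>
    (norm_conserved H' hH' ψ' hψ'm t ht).trans (by rw [← h0]; exact hnorm)
  set u : ℝ → EuclideanSpace ℂ (Fin n) := fun t => ψ t - ψ' t with hu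
  set f : ℝ → ℝ := fun t => Complex.re ⟪u t, u t⟫_ℂ with hf
  set g : ℝ → ℝ := fun t => 2 * Complex.re ⟪ψ t, (-Complex.I) • mv (H t - H' t) (ψ' t)⟫_ℂ
    with hg
  have hderiv : ∀ t ∈ Set.Icc (0:ℝ) T, HasDerivWithinAt f (g t) (Set.Icc 0 T) t := by
    intro t ht
    have hd : HasDerivAt u
        ((-Complex.I) • mv (H t) (ψ t) - (-Complex.I) • mv (H' t) (ψ' t)) t :=
      (hψm t ht).sub (hψ'm t ht)
    have hinner := hd.inner ℂ hd
    have hre := Complex.reCLM.hasFDerivAt.comp_hasDerivAt t hinner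
    have heq : Complex.reCLM
        (⟪u t, (-Complex.I) • mv (H t) (ψ t) - (-Complex.I) • mv (H' t) (ψ' t)⟫_ℂ
          + ⟪(-Complex.I) • mv (H t) (ψ t) - (-Complex.I) • mv (H' t) (ψ' t), u t⟫_ℂ) = g t := by
      simp only [hg, hu]
      exact deriv_identity (hH t ht) (hH' t ht) (ψ t) (ψ' t)
    rw [heq] at hre
    exact hre.hasDerivWithinAt
  have hbound : ∀ t ∈ Set.Ico (0:ℝ) T, ‖g t‖ ≤ 2 * δ := by
    intro t ht
    have ht' := Set.Ico_subset_Icc_self ht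
    have h1 : ‖⟪ψ t, (-Complex.I) • mv (H t - H' t) (ψ' t)⟫_ℂ‖ ≤ δ := by
      calc ‖⟪ψ t, (-Complex.I) • mv (H t - H' t) (ψ' t)⟫_ℂ‖
          ≤ ‖ψ t‖ * ‖(-Complex.I) • mv (H t - H' t) (ψ' t)‖ := norm_inner_le_norm _ _
        _ = ‖mv (H t - H' t) (ψ' t)‖ := by
            rw [hcons t ht', norm_smul]; simp
        _ ≤ ‖H t - H' t‖ * ‖ψ' t‖ := mv_norm _ _
        _ ≤ δ := by rw [hcons' t ht']; simpa using hclose t ht'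
    have h2 : |Complex.re ⟪ψ t, (-Complex.I) • mv (H t - H' t) (ψ' t)⟫_ℂ|
        ≤ ‖⟪ψ t, (-Complex.I) • mv (H t - H' t) (ψ' t)⟫_ℂ‖ := Complex.abs_re_le_norm _
    simp only [hg, Real.norm_eq_abs, abs_mul, abs_two]
    nlinarith [h1, h2]
  have hmain := norm_image_sub_le_of_norm_deriv_le_segment' hderiv hbound T
    (Set.right_mem_Icc.2 hT)
  have hf0 : f 0 = 0 := by simp [hf, hu, h0]
  have hfT : f T = ‖ψ T - ψ' T‖ ^ 2 := by
    rw [hf]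
    exact inner_self_eq_norm_sq (𝕜 := ℂ) _
  rw [hf0, sub_zero, Real.norm_eq_abs] at hmain
  have hfT' : ‖ψ T - ψ' T‖ ^ 2 ≤ 2 * T * δ := by
    rw [← hfT]
    calc f T ≤ |f T| := le_abs_self _
      _ ≤ 2 * δ * (T - 0) := hmain
      _ = 2 * T * δ := by ring
  rw [Real.le_sqrt (norm_nonneg _)]
  exact hfT'
  positivity
end

section
/- Let n be a positive integer, T ≥ 0 and δ ≥ 0. Let H, H' : ℝ → Matrix (Fin n) (Fin n) ℂ be time-dependent Hamiltonians (H(t) and H'(t) Hermitian for every t ∈ [0,T]) and let ψ, ψ' : ℝ → EuclideanSpace ℂ (Fin n) solve the Schrödinger equation for H and H' respectively on [0,T], with ψ(0) = ψ'(0) and ‖ψ(0)‖ = 1. If ‖H(t) − H'(t)‖ ≤ δ (spectral norm) for all t ∈ [0,T], then the real part of the inner product ⟪ψ'(T), ψ(T)⟫ is at least 1 − δT. -/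
open scoped Matrix.Norms.L2Operator InnerProductSpace


lemma herm_inner_aux (n : ℕ) (A : Matrix (Fin n) (Fin n) ℂ) (hA : A.IsHermitian)
    (x y : EuclideanSpace ℂ (Fin n)) :
    ⟪((EuclideanSpace.equiv (Fin n) ℂ).symm (A.mulVec x)), y⟫_ℂ
      = ⟪x, ((EuclideanSpace.equiv (Fin n) ℂ).symm (A.mulVec y))⟫_ℂ := by
  simp only [EuclideanSpace.inner_eq_star_dotProduct]
  show dotProduct y (star (A.mulVec x)) = dotProduct (A.mulVec y) (star x)
  rw [dotProduct_comm (A.mulVec y), dotProduct_comm y, Matrix.star_mulVec, ← Matrix.dotProduct_mulVec, hA.eq]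

lemma norm_const_aux (n : ℕ) (T : ℝ) (hT : 0 ≤ T)
    (H : ℝ → Matrix (Fin n) (Fin n) ℂ)
    (hH : ∀ t ∈ Set.Icc (0 : ℝ) T, (H t).IsHermitian)
    (ψ : ℝ → EuclideanSpace ℂ (Fin n))
    (hψ : ∀ t ∈ Set.Icc (0 : ℝ) T,
      HasDerivAt ψ ((-Complex.I) • (WithLp.toLp 2 ((H t).mulVec (ψ t)) : EuclideanSpace ℂ (Fin n))) t) :
    ∀ t ∈ Set.Icc (0 : ℝ) T, ‖ψ t‖ = ‖ψ 0‖ := by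
  intro t ht
  set g : ℝ → ℂ := fun s => ⟪ψ s, ψ s⟫_ℂ with hg
  have hderiv : ∀ s ∈ Set.Icc (0 : ℝ) T, HasDerivWithinAt g 0 (Set.Icc (0:ℝ) T) s := by
    intro s hs
    set v : EuclideanSpace ℂ (Fin n) :=
      (EuclideanSpace.equiv (Fin n) ℂ).symm ((H s).mulVec (ψ s)) with hv
    have h1 : HasDerivAt g (⟪ψ s, (-Complex.I) • v⟫_ℂ + ⟪(-Complex.I) • v, ψ s⟫_ℂ) s :=
      (hψ s hs).inner ℂ (hψ s hs)
    have heq : (⟪ψ s, (-Complex.I) • v⟫_ℂ + ⟪(-Complex.I) • v, ψ s⟫_ℂ) = 0 := by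
      rw [inner_smul_right, inner_smul_left, hv,
        herm_inner_aux n (H s) (hH s hs), ← hv]
      have : (starRingEnd ℂ) (-Complex.I) = Complex.I := by simp
      rw [this]; ring
    rw [heq] at h1
    exact h1.hasDerivWithinAt
  have hb := (convex_Icc (0:ℝ) T).norm_image_sub_le_of_norm_hasDerivWithin_le (C := 0) hderiv
    (fun s _ => by simp) ⟨le_refl 0, hT⟩ ht
  have hgt : g t = g 0 := by
    have h2 : ‖g t - g 0‖ ≤ 0 := by simpa using hb
    have h3 := le_antisymm h2 (norm_nonneg _)
    rwa [norm_sub_eq_zero_iff] at h3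
  have h1 : ‖ψ t‖ ^ 2 = ‖ψ 0‖ ^ 2 := by
    rw [← inner_self_eq_norm_sq (𝕜 := ℂ), ← inner_self_eq_norm_sq (𝕜 := ℂ)]
    exact congrArg Complex.re hgt
  nlinarith [norm_nonneg (ψ t), norm_nonneg (ψ 0)]

/-- If two time-dependent Hamiltonians stay within spectral distance `δ` of each other on
`[0, T]`, then the solutions of the corresponding Schrödinger equations, starting from the same
normalized initial state, satisfy `Re⟪ψ'(T), ψ(T)⟫ ≥ 1 - δ T`. -/
theorem schrodinger_evolution_overlap_bound
    (n : ℕ) (hn : 0 < n) (T δ : ℝ) (hT : 0 ≤ T) (hδ : 0 ≤ δ)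
    (H H' : ℝ → Matrix (Fin n) (Fin n) ℂ)
    (hH : ∀ t ∈ Set.Icc (0 : ℝ) T, (H t).IsHermitian)
    (hH' : ∀ t ∈ Set.Icc (0 : ℝ) T, (H' t).IsHermitian)
    (ψ ψ' : ℝ → EuclideanSpace ℂ (Fin n))
    (hψ : ∀ t ∈ Set.Icc (0 : ℝ) T,
      HasDerivAt ψ ((-Complex.I) • (WithLp.toLp 2 ((H t).mulVec (ψ t)) : EuclideanSpace ℂ (Fin n))) t)
    (hψ' : ∀ t ∈ Set.Icc (0 : ℝ) T,
      HasDerivAt ψ' ((-Complex.I) • (WithLp.toLp 2 ((H' t).mulVec (ψ' t)) : EuclideanSpace ℂ (Fin n))) t)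
    (h0 : ψ 0 = ψ' 0) (hnorm : ‖ψ 0‖ = 1)
    (hclose : ∀ t ∈ Set.Icc (0 : ℝ) T, ‖H t - H' t‖ ≤ δ) :
    1 - δ * T ≤ (⟪ψ' T, ψ T⟫_ℂ).re := by
  have hψn := norm_const_aux n T hT H hH ψ hψ
  have hψ'n := norm_const_aux n T hT H' hH' ψ' hψ'
  have h0' : ‖ψ' 0‖ = 1 := by rw [← h0]; exact hnorm
  set f : ℝ → ℂ := fun t => ⟪ψ' t, ψ t⟫_ℂ with hf
  set F' : ℝ → ℂ := fun t => -Complex.I *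
    ⟪ψ' t, ((EuclideanSpace.equiv (Fin n) ℂ).symm ((H t - H' t).mulVec (ψ t)))⟫_ℂ with hF'
  have hderiv : ∀ s ∈ Set.Icc (0:ℝ) T, HasDerivWithinAt f (F' s) (Set.Icc (0:ℝ) T) s := by
    intro s hs
    set v : EuclideanSpace ℂ (Fin n) :=
      (EuclideanSpace.equiv (Fin n) ℂ).symm ((H s).mulVec (ψ s)) with hv
    set w : EuclideanSpace ℂ (Fin n) :=
      (EuclideanSpace.equiv (Fin n) ℂ).symm ((H' s).mulVec (ψ' s)) with hw
    have h1 : HasDerivAt f (⟪ψ' s, (-Complex.I) • v⟫_ℂ + ⟪(-Complex.I) • w, ψ s⟫_ℂ) s :=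
      (hψ' s hs).inner ℂ (hψ s hs)
    have heq : ⟪ψ' s, (-Complex.I) • v⟫_ℂ + ⟪(-Complex.I) • w, ψ s⟫_ℂ = F' s := by
      rw [inner_smul_right, inner_smul_left, hw, herm_inner_aux n (H' s) (hH' s hs)]
      have hst : (starRingEnd ℂ) (-Complex.I) = Complex.I := by simp
      rw [hst, hF']
      have hsub : ((EuclideanSpace.equiv (Fin n) ℂ).symm ((H s - H' s).mulVec (ψ s)))
          = v - (EuclideanSpace.equiv (Fin n) ℂ).symm ((H' s).mulVec (ψ s)) := by
        rw [hv, show (H s - H' s).mulVec (ψ s)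
          = (H s).mulVec (ψ s) - (H' s).mulVec (ψ s) from Matrix.sub_mulVec _ _ _, map_sub]
      simp only [hsub, inner_sub_right]; ring
    rw [heq] at h1
    exact h1.hasDerivWithinAt
  have hbound : ∀ s ∈ Set.Icc (0:ℝ) T, ‖F' s‖ ≤ δ := by
    intro s hs
    have h1 : ‖F' s‖ =
        ‖⟪ψ' s, ((EuclideanSpace.equiv (Fin n) ℂ).symm ((H s - H' s).mulVec (ψ s)))⟫_ℂ‖ := by
      rw [hF', norm_mul]; simp
    rw [h1]
    calc ‖⟪ψ' s, ((EuclideanSpace.equiv (Fin n) ℂ).symm ((H s - H' s).mulVec (ψ s)))⟫_ℂ‖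
        ≤ ‖ψ' s‖ * ‖((EuclideanSpace.equiv (Fin n) ℂ).symm ((H s - H' s).mulVec (ψ s)))‖ :=
          norm_inner_le_norm _ _
      _ ≤ ‖ψ' s‖ * (‖H s - H' s‖ * ‖ψ s‖) := by
          exact mul_le_mul_of_nonneg_left (Matrix.l2_opNorm_mulVec _ _) (norm_nonneg _)
      _ ≤ 1 * (δ * 1) := by
          rw [hψ'n s hs, h0', hψn s hs, hnorm]
          exact mul_le_mul_of_nonneg_left (by simpa using hclose s hs) (by norm_num)
      _ = δ := by ring
  have hb := (convex_Icc (0:ℝ) T).norm_image_sub_le_of_norm_hasDerivWithin_le hderiv hbound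
    ⟨le_refl 0, hT⟩ ⟨hT, le_refl T⟩
  have hf0 : f 0 = 1 := by
    rw [hf]
    show ⟪ψ' 0, ψ 0⟫_ℂ = 1
    rw [← h0, inner_self_eq_norm_sq_to_K (𝕜 := ℂ), hnorm]
    norm_num
  have h2 : ‖f T - f 0‖ ≤ δ * T := by
    have : ‖(T:ℝ) - 0‖ = T := by rw [sub_zero, Real.norm_eq_abs, abs_of_nonneg hT]
    calc ‖f T - f 0‖ ≤ δ * ‖T - 0‖ := hb
      _ = δ * T := by rw [this]
  have h3 : |(f T - f 0).re| ≤ ‖f T - f 0‖ := Complex.abs_re_le_norm _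
  have h4 : (f 0).re = 1 := by rw [hf0]; simp
  have h5 : (f T - f 0).re = (f T).re - (f 0).re := Complex.sub_re _ _
  have h7 : -(δ * T) ≤ (f T - f 0).re := neg_le_of_abs_le (h3.trans h2)
  show 1 - δ * T ≤ (f T).re
  linarith
end

section
/- Let E be a complex inner product space and let v₀, v₁ ∈ E satisfy ‖v₀‖ = 1 and Re⟪v₀, v₁⟫ ≥ 0. Then for every s ∈ [0,1], ‖(1−s) • v₀ + s • v₁‖² ≥ ‖v₁‖² / (‖v₁‖² + 1). -/
open scoped InnerProductSpace

/-- Spectral gap lower bound: for unit `v₀` with `Re⟪v₀, v₁⟫ ≥ 0`, the interpolated vector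
`v_s = (1-s)•v₀ + s•v₁` satisfies `‖v_s‖² ≥ ‖v₁‖²/(‖v₁‖² + 1)` for every `s ∈ [0,1]`. -/
theorem interpolated_norm_sq_lower_bound
    {E : Type*} [NormedAddCommGroup E] [InnerProductSpace ℂ E]
    (v₀ v₁ : E) (h0 : ‖v₀‖ = 1) (hre : 0 ≤ (⟪v₀, v₁⟫_ℂ).re) :
    ∀ s ∈ Set.Icc (0 : ℝ) 1,
      ‖v₁‖ ^ 2 / (‖v₁‖ ^ 2 + 1) ≤ ‖(1 - s) • v₀ + s • v₁‖ ^ 2 := by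
  intro s hs
  obtain ⟨hs0, hs1⟩ := hs
  have ha : (0:ℝ) ≤ 1 - s := by linarith
  have hinner : (⟪(1 - s) • v₀, s • v₁⟫_ℂ).re = (1 - s) * s * (⟪v₀, v₁⟫_ℂ).re := by
    rw [← Complex.coe_smul (1 - s) v₀, ← Complex.coe_smul s v₁, inner_smul_left,
      inner_smul_right]
    simp
    ring
  have hexp : ‖(1 - s) • v₀ + s • v₁‖ ^ 2
      = (1 - s) ^ 2 + 2 * ((1 - s) * s * (⟪v₀, v₁⟫_ℂ).re) + s ^ 2 * ‖v₁‖ ^ 2 := by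
    rw [@norm_add_sq ℂ]
    simp only [RCLike.re_to_complex]
    rw [hinner]
    simp [norm_smul, abs_of_nonneg, ha, hs0, h0, mul_pow]
  rw [hexp]
  have hc : (0:ℝ) ≤ ‖v₁‖ ^ 2 := sq_nonneg _
  have hmid : 0 ≤ 2 * ((1 - s) * s * (⟪v₀, v₁⟫_ℂ).re) := by positivity
  have hpos : (0:ℝ) < ‖v₁‖ ^ 2 + 1 := by linarith
  rw [div_le_iff₀ hpos]
  nlinarith [sq_nonneg ((‖v₁‖ ^ 2 + 1) * s - 1)]
end

section
/- Let E be a complex inner product space and let v₀, v₁ ∈ E satisfy ‖v₀‖ = 1, Re⟪v₀, v₁⟫ ≥ 0 and v₁ ≠ 0. For s ∈ [0,1] set v_s = (1−s) • v₀ + s • v₁ and v' = v₁ − v₀. Then for every s ∈ [0,1] and every x ∈ E, ‖⟪v_s, x⟫ • v' + ⟪v', x⟫ • v_s‖ ≤ (2 (‖v₁‖² + 1)² / ‖v₁‖³) · ‖v_s‖⁴ · ‖x‖. -/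
open scoped InnerProductSpace

/-- Delay-factor bound: for unit `v₀` with `Re⟪v₀, v₁⟫ ≥ 0` and `v₁ ≠ 0`, setting
`v_s = (1-s)•v₀ + s•v₁` and `v' = v₁ - v₀`, the derivative of the rank-one Hamiltonian,
`x ↦ ⟪v_s, x⟫•v' + ⟪v', x⟫•v_s`, is bounded by `(2(‖v₁‖²+1)²/‖v₁‖³)·‖v_s‖⁴·‖x‖`. -/
theorem rank_one_hamiltonian_derivative_bound
    {E : Type*} [NormedAddCommGroup E] [InnerProductSpace ℂ E]
    (v₀ v₁ : E) (h0 : ‖v₀‖ = 1) (hre : 0 ≤ (⟪v₀, v₁⟫_ℂ).re) (hv₁ : v₁ ≠ 0) :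
    ∀ s ∈ Set.Icc (0 : ℝ) 1, ∀ x : E,
      ‖⟪(1 - s) • v₀ + s • v₁, x⟫_ℂ • (v₁ - v₀) +
          ⟪v₁ - v₀, x⟫_ℂ • ((1 - s) • v₀ + s • v₁)‖ ≤
        (2 * (‖v₁‖ ^ 2 + 1) ^ 2 / ‖v₁‖ ^ 3) * ‖(1 - s) • v₀ + s • v₁‖ ^ 4 * ‖x‖ := by
  rintro s ⟨hs0, hs1⟩ x
  set b := ‖v₁‖ with hb
  have hbpos : 0 < b := norm_pos_iff.mpr hv₁
  set vs := (1 - s) • v₀ + s • v₁ with hvs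
  set v' := v₁ - v₀ with hv'
  have h1 : ‖⟪vs, x⟫_ℂ • v' + ⟪v', x⟫_ℂ • vs‖ ≤ 2 * ‖vs‖ * ‖v'‖ * ‖x‖ := by
    calc ‖⟪vs,x⟫_ℂ • v' + ⟪v',x⟫_ℂ • vs‖ ≤ ‖⟪vs,x⟫_ℂ • v'‖ + ‖⟪v',x⟫_ℂ • vs‖ := norm_add_le _ _
    _ = ‖⟪vs,x⟫_ℂ‖ * ‖v'‖ + ‖⟪v',x⟫_ℂ‖ * ‖vs‖ := by rw [norm_smul, norm_smul]
    _ ≤ ‖vs‖*‖x‖*‖v'‖ + ‖v'‖*‖x‖*‖vs‖ := by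
        gcongr <;> exact norm_inner_le_norm _ _
    _ = 2*‖vs‖*‖v'‖*‖x‖ := by ring
  have hsym : RCLike.re ⟪v₁, v₀⟫_ℂ = (⟪v₀, v₁⟫_ℂ).re := inner_re_symm v₁ v₀
  have hd2 : ‖v'‖^2 ≤ b^2 + 1 := by
    have h := @norm_sub_sq ℂ _ _ _ _ v₁ v₀
    rw [hv', h, h0, hsym]; simp only [one_pow]; linarith
  have hn2 : b^2/(1+b^2) ≤ ‖vs‖^2 := by
    have h := @norm_add_sq ℂ _ _ _ _ ((1-s) • v₀) (s • v₁)
    have e1 : ‖(1-s) • v₀‖ = 1 - s := by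
      rw [norm_smul, h0]; simp [abs_of_nonneg (by linarith : (0:ℝ) ≤ 1 - s)]
    have e2 : ‖s • v₁‖ = s * b := by
      rw [norm_smul]; simp [abs_of_nonneg hs0, hb]
    have e3 : RCLike.re ⟪(1-s) • v₀, s • v₁⟫_ℂ = (1-s) * s * (⟪v₀, v₁⟫_ℂ).re := by
      rw [RCLike.real_smul_eq_coe_smul (K := ℂ), RCLike.real_smul_eq_coe_smul (K := ℂ) s,
        inner_smul_left, inner_smul_right]
      simp [Complex.ofReal_re]; ring
    rw [hvs, h, e1, e2, e3]
    rw [div_le_iff₀ (by positivity)]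
    nlinarith [sq_nonneg ((1+b^2)*s - 1), mul_nonneg (mul_nonneg (by linarith : (0:ℝ) ≤ 1-s) hs0) hre, sq_nonneg b]
  -- key: 2 * ‖v'‖ ≤ C * ‖vs‖^3
  have hC : 2 * ‖v'‖ ≤ (2 * (b^2+1)^2 / b^3) * ‖vs‖^3 := by
    have hnn : 0 ≤ ‖vs‖ := norm_nonneg _
    have hsq : (2*‖v'‖)^2 ≤ ((2 * (b^2+1)^2 / b^3) * ‖vs‖^3)^2 := by
      have : ((2 * (b^2+1)^2 / b^3) * ‖vs‖^3)^2
          = (2 * (b^2+1)^2 / b^3)^2 * (‖vs‖^2)^3 := by ring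
      rw [this]
      have hgoal : (2 * (b^2+1)^2 / b^3)^2 * (b^2/(1+b^2))^3 = 4 * (b^2+1) := by
        field_simp; ring
      calc (2*‖v'‖)^2 = 4 * ‖v'‖^2 := by ring
        _ ≤ 4 * (b^2+1) := by linarith
        _ = (2 * (b^2+1)^2 / b^3)^2 * (b^2/(1+b^2))^3 := hgoal.symm
        _ ≤ (2 * (b^2+1)^2 / b^3)^2 * (‖vs‖^2)^3 := by gcongr <;> positivity
    have h2 : (0:ℝ) ≤ 2 * ‖v'‖ := by positivity
    have h3 : (0:ℝ) ≤ (2 * (b^2+1)^2 / b^3) * ‖vs‖^3 := by positivity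
    exact (pow_le_pow_iff_left₀ h2 h3 (by norm_num)).mp hsq
  calc ‖⟪vs, x⟫_ℂ • v' + ⟪v', x⟫_ℂ • vs‖ ≤ 2 * ‖vs‖ * ‖v'‖ * ‖x‖ := h1
    _ = (2 * ‖v'‖) * (‖vs‖ * ‖x‖) := by ring
    _ ≤ ((2 * (b^2+1)^2 / b^3) * ‖vs‖^3) * (‖vs‖ * ‖x‖) :=
        mul_le_mul_of_nonneg_right hC (mul_nonneg (norm_nonneg _) (norm_nonneg _))
    _ = (2 * (b^2+1)^2 / b^3) * ‖vs‖^4 * ‖x‖ := by ring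
end

section
/- Let E be a complex inner product space and let v₀, v₁ ∈ E satisfy ‖v₀‖ = 1 and Re⟪v₀, v₁⟫ ≥ 0. For s ∈ [0,1] set v_s = (1−s) • v₀ + s • v₁, and for a positive integer r let s' = ⌈s·r⌉/r. Then for every s ∈ [0,1] and every x ∈ E, ‖⟪v_s, x⟫ • v_s − ⟪v_{s'}, x⟫ • v_{s'}‖ ≤ (2/r)·(1 + 3‖v₁‖ + 2‖v₁‖²)·‖x‖. -/
open scoped InnerProductSpace

/-- Adiabatic discretization error bound: for unit `v₀` with `Re⟪v₀, v₁⟫ ≥ 0`, setting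
`v_s = (1-s)•v₀ + s•v₁` and `s' = ⌈s·r⌉/r`, the rank-one Hamiltonians `x ↦ ⟪v_s, x⟫•v_s`
and `x ↦ ⟪v_{s'}, x⟫•v_{s'}` deviate by at most `(2/r)(1 + 3‖v₁‖ + 2‖v₁‖²)` in operator
norm. -/
theorem adiabatic_discretization_error_bound
    {E : Type*} [NormedAddCommGroup E] [InnerProductSpace ℂ E]
    (v₀ v₁ : E) (h0 : ‖v₀‖ = 1) (hre : 0 ≤ (⟪v₀, v₁⟫_ℂ).re)
    (r : ℕ) (hr : 0 < r) :
    ∀ s ∈ Set.Icc (0 : ℝ) 1, ∀ x : E,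
      ‖⟪(1 - s) • v₀ + s • v₁, x⟫_ℂ • ((1 - s) • v₀ + s • v₁) -
          ⟪(1 - (⌈s * r⌉₊ : ℝ) / r) • v₀ + ((⌈s * r⌉₊ : ℝ) / r) • v₁, x⟫_ℂ •
            ((1 - (⌈s * r⌉₊ : ℝ) / r) • v₀ + ((⌈s * r⌉₊ : ℝ) / r) • v₁)‖ ≤
        (2 / r) * (1 + 3 * ‖v₁‖ + 2 * ‖v₁‖ ^ 2) * ‖x‖ := by
  rintro s ⟨hs0, hs1⟩ x
  have hrR : (0 : ℝ) < (r : ℝ) := by exact_mod_cast hr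
  set a : ℝ := (⌈s * r⌉₊ : ℝ) / r with ha
  have hsa : s ≤ a := by
    rw [ha, le_div_iff₀ hrR]
    exact Nat.le_ceil _
  have haub : a ≤ s + 1 / r := by
    rw [ha, div_le_iff₀ hrR]
    have h1 := (Nat.ceil_lt_add_one (a := s * r) (by positivity)).le
    have h2 : (s + 1 / r) * r = s * r + 1 := by field_simp
    rw [h2]; linarith
  have ha1 : a ≤ 1 := by
    rw [ha, div_le_one hrR]
    have : (⌈s * r⌉₊ : ℕ) ≤ r := by
      apply Nat.ceil_le.2
      calc s * r ≤ 1 * r := by nlinarith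
        _ = (r : ℝ) := by ring
    exact_mod_cast this
  have ha0 : 0 ≤ a := le_trans hs0 hsa
  set u : E := (1 - s) • v₀ + s • v₁ with hu
  set w : E := (1 - a) • v₀ + a • v₁ with hw
  set M := ‖v₁‖ with hM
  have hM0 : 0 ≤ M := norm_nonneg _
  have hubd : ‖u‖ ≤ 1 + M := by
    calc ‖u‖ ≤ ‖(1 - s) • v₀‖ + ‖s • v₁‖ := norm_add_le _ _
      _ = |1 - s| * ‖v₀‖ + |s| * M := by rw [norm_smul, norm_smul]; simp [Real.norm_eq_abs, hM]
      _ ≤ 1 + M := by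
          rw [h0, abs_of_nonneg (by linarith), abs_of_nonneg hs0]
          nlinarith
  have hwbd : ‖w‖ ≤ 1 + M := by
    calc ‖w‖ ≤ ‖(1 - a) • v₀‖ + ‖a • v₁‖ := norm_add_le _ _
      _ = |1 - a| * ‖v₀‖ + |a| * M := by rw [norm_smul, norm_smul]; simp [Real.norm_eq_abs, hM]
      _ ≤ 1 + M := by
          rw [h0, abs_of_nonneg (by linarith), abs_of_nonneg ha0]
          nlinarith
  have hdiff : u - w = (a - s) • (v₀ - v₁) := by
    rw [hu, hw]
    module
  have hdbd : ‖u - w‖ ≤ (1 / r) * (1 + M) := by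
    rw [hdiff, norm_smul, Real.norm_eq_abs, abs_of_nonneg (by linarith)]
    have h1 : ‖v₀ - v₁‖ ≤ 1 + M := by
      calc ‖v₀ - v₁‖ ≤ ‖v₀‖ + ‖v₁‖ := norm_sub_le _ _
        _ = 1 + M := by rw [h0]
    have h2 : a - s ≤ 1 / r := by linarith
    have hinv : (0:ℝ) ≤ 1 / r := by positivity
    nlinarith [norm_nonneg (v₀ - v₁), sub_nonneg.2 hsa]
  have key : ⟪u, x⟫_ℂ • u - ⟪w, x⟫_ℂ • w = ⟪u - w, x⟫_ℂ • u + ⟪w, x⟫_ℂ • (u - w) := by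
    rw [inner_sub_left]
    module
  rw [key]
  have hx0 : (0:ℝ) ≤ ‖x‖ := norm_nonneg _
  calc ‖⟪u - w, x⟫_ℂ • u + ⟪w, x⟫_ℂ • (u - w)‖
      ≤ ‖⟪u - w, x⟫_ℂ • u‖ + ‖⟪w, x⟫_ℂ • (u - w)‖ := norm_add_le _ _
    _ = ‖⟪u - w, x⟫_ℂ‖ * ‖u‖ + ‖⟪w, x⟫_ℂ‖ * ‖u - w‖ := by rw [norm_smul, norm_smul]
    _ ≤ (‖u - w‖ * ‖x‖) * ‖u‖ + (‖w‖ * ‖x‖) * ‖u - w‖ := by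
        gcongr <;> exact norm_inner_le_norm _ _
    _ ≤ ((1 / r) * (1 + M) * ‖x‖) * (1 + M) + ((1 + M) * ‖x‖) * ((1 / r) * (1 + M)) := by
        gcongr <;> first
          | exact hdbd
          | exact hubd
          | exact hwbd
          | positivity
    _ ≤ (2 / r) * (1 + 3 * M + 2 * M ^ 2) * ‖x‖ := by
        have hinv : (0:ℝ) ≤ 1 / r := by positivity
        have h2r : (2:ℝ) / r = 2 * (1 / r) := by ring
        rw [h2r]
        nlinarith [mul_nonneg (mul_nonneg hinv hM0) hx0,
          mul_nonneg (mul_nonneg (mul_nonneg hinv hM0) hM0) hx0]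
end

section
/- Let a < b be real numbers and let f : ℝ → ℂ be continuous on [a,b] with f not identically zero on [a,b]. For each positive integer N and grid points x_k = a + k(b−a)/N (k = 0,…,N−1), define M_N = max_{0 ≤ k < N} ‖f(x_k)‖² and S_N = Σ_{k=0}^{N−1} ‖f(x_k)‖². Then the sequence N·M_N/S_N converges, as N → ∞, to (b−a)·(sup_{x ∈ [a,b]} ‖f(x)‖)² / ∫_a^b ‖f(x)‖² dx. -/
open scoped Topology

open Filter Set MeasureTheory intervalIntegral in
lemma riemann_sum_tendsto_aux (a b : ℝ) (hab : a < b) (g : ℝ → ℝ)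
    (hg : ContinuousOn g (Set.Icc a b)) :
    Filter.Tendsto
      (fun N : ℕ => ((b - a) / N) * ∑ k ∈ Finset.range N, g (a + k * (b - a) / N))
      Filter.atTop (𝓝 (∫ x in a..b, g x)) := by
  have hba : (0:ℝ) < b - a := by linarith
  rw [Metric.tendsto_atTop]
  intro ε hε
  have hUC := isCompact_Icc.uniformContinuousOn_of_continuous hg
  rw [Metric.uniformContinuousOn_iff] at hUC
  have hε'pos : 0 < ε / (2 * (b - a)) := by positivity
  obtain ⟨δ, hδ, hδε⟩ := hUC (ε / (2 * (b - a))) hε'pos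
  obtain ⟨N₀, hN₀⟩ := exists_nat_gt ((b - a) / δ)
  refine ⟨max N₀ 1, fun N hN => ?_⟩
  have hN1 : 1 ≤ N := le_trans (le_max_right _ _) hN
  have hNpos : (0:ℝ) < N := by exact_mod_cast hN1
  have hmesh : (b - a) / N < δ := by
    rw [div_lt_iff₀ hNpos]
    have hN₀N : (N₀ : ℝ) ≤ N := by exact_mod_cast le_trans (le_max_left _ _) hN
    have h2 : (b - a) / δ < N := lt_of_lt_of_le hN₀ hN₀N
    rw [div_lt_iff₀ hδ] at h2
    nlinarith
  set x : ℕ → ℝ := fun k => a + k * (b - a) / N with hx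
  have hstep : ∀ k : ℕ, x (k + 1) - x k = (b - a) / N := by
    intro k; simp only [hx]; push_cast; ring
  have hstep' : ∀ k : ℕ, x (k + 1) = x k + (b - a) / N := by
    intro k; simp only [hx]; push_cast; ring
  have hmono : ∀ k : ℕ, x k ≤ x (k + 1) := by
    intro k
    rw [hstep' k]
    exact le_add_of_nonneg_right (by positivity)
  have hxmem : ∀ k ≤ N, x k ∈ Set.Icc a b := by
    intro k hk
    have hk' : (k:ℝ) ≤ N := by exact_mod_cast hk
    constructor
    · have : 0 ≤ (k:ℝ) * (b - a) / N := by positivity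
      simp only [hx]; linarith
    · have : (k:ℝ) * (b - a) / N ≤ b - a := by
        rw [div_le_iff₀ hNpos]; nlinarith
      simp only [hx]; linarith
  have hInt : ∀ k, k + 1 ≤ N → IntervalIntegrable g volume (x k) (x (k + 1)) := by
    intro k hk
    apply (hg.mono ?_).intervalIntegrable
    rw [Set.uIcc_of_le (hmono k)]
    exact Set.Icc_subset_Icc (hxmem k (by omega)).1 (hxmem (k + 1) hk).2
  have hsplit : ∑ k ∈ Finset.range N, (∫ t in x k..x (k + 1), g t) = ∫ t in (x 0)..(x N), g t :=
    intervalIntegral.sum_integral_adjacent_intervals fun k hk => hInt k hk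
  have hx0 : x 0 = a := by simp [hx]
  have hxN : x N = b := by
    simp only [hx]
    field_simp
    ring
  rw [hx0, hxN] at hsplit
  have hgoal_eq : (b - a) / (N:ℝ) * ∑ k ∈ Finset.range N, g (a + k * (b - a) / N)
      = ∑ k ∈ Finset.range N, ((b - a) / (N:ℝ)) * g (x k) := Finset.mul_sum _ _ _
  clear_value x
  have hconst : ∀ k, k + 1 ≤ N →
      ((b - a) / N) * g (x k) = ∫ _t in x k..x (k + 1), g (x k) := by
    intro k hk
    rw [intervalIntegral.integral_const, hstep k, smul_eq_mul]
  have hterm : ∀ k, k + 1 ≤ N →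
      |((b - a) / N) * g (x k) - ∫ t in x k..x (k + 1), g t| ≤
        (ε / (2 * (b - a))) * ((b - a) / N) := by
    intro k hk
    rw [hconst k hk, ← intervalIntegral.integral_sub intervalIntegrable_const (hInt k hk)]
    have hbound : ∀ t ∈ Set.uIoc (x k) (x (k + 1)), ‖g (x k) - g t‖ ≤ ε / (2 * (b - a)) := by
      intro t ht
      rw [Set.uIoc_of_le (hmono k)] at ht
      have htm : t ∈ Set.Icc a b := by
        constructor
        · exact le_trans (hxmem k (by omega)).1 ht.1.le
        · exact le_trans ht.2 (hxmem (k + 1) hk).2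
      have hd : dist (x k) t < δ := by
        rw [Real.dist_eq, abs_lt]
        have h1 := ht.1
        have h2 := ht.2
        have h3 := hstep k
        constructor <;> [linarith; linarith]
      exact (hδε (x k) (hxmem k (by omega)) t htm hd).le
    have := intervalIntegral.norm_integral_le_of_norm_le_const hbound
    rw [Real.norm_eq_abs] at this
    calc |∫ t in x k..x (k + 1), (g (x k) - g t)|
        ≤ (ε / (2 * (b - a))) * |x (k + 1) - x k| := this
      _ = (ε / (2 * (b - a))) * ((b - a) / N) := by
          rw [hstep k, abs_of_nonneg (by positivity)]
  rw [Real.dist_eq, hgoal_eq, ← hsplit, ← Finset.sum_sub_distrib]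
  calc |∑ k ∈ Finset.range N, (((b - a) / N) * g (x k) - ∫ t in x k..x (k + 1), g t)|
      ≤ ∑ k ∈ Finset.range N, |((b - a) / N) * g (x k) - ∫ t in x k..x (k + 1), g t| :=
        Finset.abs_sum_le_sum_abs _ _
    _ ≤ ∑ _k ∈ Finset.range N, (ε / (2 * (b - a))) * ((b - a) / N) :=
        Finset.sum_le_sum fun k hk => hterm k (Finset.mem_range.mp hk)
    _ = N * ((ε / (2 * (b - a))) * ((b - a) / N)) := by
        rw [Finset.sum_const, Finset.card_range, nsmul_eq_mul]
    _ = ε / 2 := by field_simp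
    _ < ε := by linarith

open Filter Set in
lemma sup_grid_tendsto_aux (a b : ℝ) (hab : a < b) (g : ℝ → ℝ)
    (hg : ContinuousOn g (Set.Icc a b)) {xs : ℝ} (hxs : xs ∈ Set.Icc a b)
    (hmax : ∀ y ∈ Set.Icc a b, g y ≤ g xs) :
    Filter.Tendsto (fun N : ℕ => ⨆ k : Fin N, g (a + k * (b - a) / N))
      Filter.atTop (𝓝 (g xs)) := by
  have hba : (0:ℝ) < b - a := by linarith
  rw [Metric.tendsto_atTop]
  intro ε hε
  have hc : ContinuousWithinAt g (Set.Icc a b) xs := hg xs hxs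
  rw [Metric.continuousWithinAt_iff] at hc
  obtain ⟨δ, hδ, hδε⟩ := hc ε hε
  obtain ⟨N₀, hN₀⟩ := exists_nat_gt ((b - a) / δ)
  refine ⟨max N₀ 1, fun N hN => ?_⟩
  have hN1 : 1 ≤ N := le_trans (le_max_right _ _) hN
  have hNpos : (0:ℝ) < N := by exact_mod_cast hN1
  have hmesh : (b - a) / N < δ := by
    rw [div_lt_iff₀ hNpos]
    have hN₀N : (N₀ : ℝ) ≤ N := by exact_mod_cast le_trans (le_max_left _ _) hN
    have h2 : (b - a) / δ < N := lt_of_lt_of_le hN₀ hN₀N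
    rw [div_lt_iff₀ hδ] at h2
    nlinarith
  haveI : Nonempty (Fin N) := ⟨⟨0, hN1⟩⟩
  have hxmem : ∀ k : Fin N, a + (k : ℕ) * (b - a) / N ∈ Set.Icc a b := by
    intro k
    have hk' : (k : ℝ) ≤ N := by exact_mod_cast k.2.le
    constructor
    · have : 0 ≤ ((k:ℕ):ℝ) * (b - a) / N := by positivity
      linarith
    · have : ((k:ℕ):ℝ) * (b - a) / N ≤ b - a := by
        rw [div_le_iff₀ hNpos]; nlinarith
      linarith
  have hbdd : BddAbove (Set.range fun k : Fin N => g (a + k * (b - a) / N)) :=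
    Set.Finite.bddAbove (Set.finite_range _)
  have hub : (⨆ k : Fin N, g (a + k * (b - a) / N)) ≤ g xs :=
    ciSup_le fun k => hmax _ (hxmem k)
  set t : ℝ := (xs - a) * N / (b - a) with ht
  have ht0 : 0 ≤ t := by
    have := hxs.1
    apply div_nonneg (by nlinarith) hba.le
  have htN : t ≤ N := by
    rw [ht, div_le_iff₀ hba]
    nlinarith [hxs.2]
  set k₀ : ℕ := min ⌊t⌋₊ (N - 1) with hk₀
  have hk₀N : k₀ < N := lt_of_le_of_lt (min_le_right _ _) (by omega)
  have hk₀le : (k₀ : ℝ) ≤ t := by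
    refine le_trans ?_ (Nat.floor_le ht0)
    exact_mod_cast min_le_left _ _
  have hk₀ge : t ≤ (k₀ : ℝ) + 1 := by
    rcases le_or_gt ⌊t⌋₊ (N - 1) with h | h
    · have hk : k₀ = ⌊t⌋₊ := min_eq_left h
      rw [hk]
      exact (Nat.lt_floor_add_one t).le
    · have hk : k₀ = N - 1 := min_eq_right h.le
      have : ((N - 1 : ℕ) : ℝ) + 1 = N := by
        have : (1:ℕ) ≤ N := hN1
        push_cast [Nat.cast_sub this]
        ring
      rw [hk, this]
      exact htN
  have h1 : (k₀ : ℝ) * (b - a) ≤ (xs - a) * N := by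
    rw [ht, le_div_iff₀ hba] at hk₀le
    linarith
  have h2 : (xs - a) * N ≤ ((k₀ : ℝ) + 1) * (b - a) := by
    rw [ht, div_le_iff₀ hba] at hk₀ge
    linarith
  have e1 : a + (k₀ : ℝ) * (b - a) / N ≤ xs := by
    have := (div_le_iff₀ hNpos).mpr h1
    linarith
  have e2 : xs ≤ a + (k₀ : ℝ) * (b - a) / N + (b - a) / N := by
    have h3 := (le_div_iff₀ hNpos).mpr h2
    have h4 : ((k₀ : ℝ) + 1) * (b - a) / N = (k₀ : ℝ) * (b - a) / N + (b - a) / N := by ring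
    linarith [h4 ▸ h3]
  have hdist : dist (a + (k₀ : ℝ) * (b - a) / N) xs < δ := by
    rw [Real.dist_eq, abs_lt]
    constructor <;> [linarith; linarith]
  have hmemk : a + (k₀ : ℝ) * (b - a) / N ∈ Set.Icc a b := hxmem ⟨k₀, hk₀N⟩
  have hclose := hδε hmemk hdist
  rw [Real.dist_eq, abs_lt] at hclose
  have hle : g (a + (k₀ : ℝ) * (b - a) / N) ≤
      ⨆ k : Fin N, g (a + k * (b - a) / N) := le_ciSup hbdd ⟨k₀, hk₀N⟩
  rw [Real.dist_eq, abs_lt]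
  constructor
  · have : g xs - ε < g (a + (k₀ : ℝ) * (b - a) / N) := by linarith [hclose.1]
    have h5 : g (a + (k₀ : ℝ) * (b - a) / N) ≤ ⨆ k : Fin N, g (a + k * (b - a) / N) := hle
    linarith
  · linarith

open Filter Set MeasureTheory in
lemma integral_pos_aux (a b : ℝ) (hab : a < b) (g : ℝ → ℝ)
    (hg : ContinuousOn g (Set.Icc a b)) (hnn : ∀ x, 0 ≤ g x)
    {x₀ : ℝ} (hx₀ : x₀ ∈ Set.Icc a b) (hpos : 0 < g x₀) :
    0 < ∫ x in a..b, g x := by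
  have hc : ContinuousWithinAt g (Set.Icc a b) x₀ := hg x₀ hx₀
  rw [Metric.continuousWithinAt_iff] at hc
  obtain ⟨δ, hδ, hδε⟩ := hc (g x₀) hpos
  set c := max a (x₀ - δ / 2) with hcdef
  set d := min b (x₀ + δ / 2) with hddef
  have hax : a ≤ x₀ := hx₀.1
  have hxb : x₀ ≤ b := hx₀.2
  have hac : a ≤ c := le_max_left _ _
  have hdb : d ≤ b := min_le_left _ _
  have hcd : c < d := by
    apply max_lt <;> apply lt_min <;> [exact hab; linarith; linarith; linarith]
  have hIoo : ∀ y ∈ Set.Ioo c d, 0 < g y := by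
    intro y hy
    have hy1 : a ≤ y := le_trans hac hy.1.le
    have hy2 : y ≤ b := le_trans hy.2.le hdb
    have hc1 : x₀ - δ / 2 ≤ c := le_max_right _ _
    have hd1 : d ≤ x₀ + δ / 2 := min_le_right _ _
    have hyd : dist y x₀ < δ := by
      rw [Real.dist_eq, abs_lt]
      constructor <;> [linarith [hy.1]; linarith [hy.2]]
    have := hδε ⟨hy1, hy2⟩ hyd
    rw [Real.dist_eq, abs_lt] at this
    linarith [this.1]
  have hint : ∀ u v, u ∈ Set.Icc a b → v ∈ Set.Icc a b →
      IntervalIntegrable g volume u v := by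
    intro u v hu hv
    exact (hg.mono (Set.uIcc_subset_Icc hu hv)).intervalIntegrable
  have hcm : c ∈ Set.Icc a b := ⟨hac, le_trans hcd.le hdb⟩
  have hdm : d ∈ Set.Icc a b := ⟨le_trans hac hcd.le, hdb⟩
  have ham : a ∈ Set.Icc a b := Set.left_mem_Icc.mpr hab.le
  have hbm : b ∈ Set.Icc a b := Set.right_mem_Icc.mpr hab.le
  have hmid : 0 < ∫ x in c..d, g x :=
    intervalIntegral.intervalIntegral_pos_of_pos_on (hint c d hcm hdm) hIoo hcd
  have h1 : 0 ≤ ∫ x in a..c, g x :=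
    intervalIntegral.integral_nonneg hcm.1 fun u _ => hnn u
  have h2 : 0 ≤ ∫ x in d..b, g x :=
    intervalIntegral.integral_nonneg hdm.2 fun u _ => hnn u
  have e1 : (∫ x in a..c, g x) + ∫ x in c..b, g x = ∫ x in a..b, g x :=
    intervalIntegral.integral_add_adjacent_intervals (hint a c ham hcm) (hint c b hcm hbm)
  have e2 : (∫ x in c..d, g x) + ∫ x in d..b, g x = ∫ x in c..b, g x :=
    intervalIntegral.integral_add_adjacent_intervals (hint c d hcm hdm) (hint d b hdm hbm)
  linarith

/-- For a continuous, not identically zero `f : ℝ → ℂ` on `[a,b]`, the quantity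
`N · max_k ‖f(x_k)‖² / Σ_k ‖f(x_k)‖²` on the uniform `N`-point grid converges to
`(b-a)·(sup_{[a,b]} ‖f‖)² / ∫_a^b ‖f‖²`. -/
theorem pointwise_encoded_max_amplitude_tendsto
    (a b : ℝ) (hab : a < b) (f : ℝ → ℂ)
    (hf : ContinuousOn f (Set.Icc a b))
    (hne : ∃ x ∈ Set.Icc a b, f x ≠ 0) :
    Filter.Tendsto
      (fun N : ℕ =>
        (N : ℝ) * (⨆ k : Fin N, ‖f (a + k * (b - a) / N)‖ ^ 2) /
          ∑ k ∈ Finset.range N, ‖f (a + k * (b - a) / N)‖ ^ 2)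
      Filter.atTop
      (𝓝 ((b - a) * (sSup ((fun x => ‖f x‖) '' Set.Icc a b)) ^ 2 /
        ∫ x in a..b, ‖f x‖ ^ 2)) := by
  have hba : (0:ℝ) < b - a := by linarith
  set g : ℝ → ℝ := fun x => ‖f x‖ ^ 2 with hgdef
  have hg : ContinuousOn g (Set.Icc a b) := (hf.norm).pow 2
  obtain ⟨xs, hxs, hmaxOn⟩ := isCompact_Icc.exists_isMaxOn (Set.nonempty_Icc.mpr hab.le) hf.norm
  have hmax : ∀ y ∈ Set.Icc a b, ‖f y‖ ≤ ‖f xs‖ := fun y hy => hmaxOn hy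
  have hsup : sSup ((fun x => ‖f x‖) '' Set.Icc a b) = ‖f xs‖ := by
    apply IsGreatest.csSup_eq
    refine ⟨⟨xs, hxs, rfl⟩, ?_⟩
    rintro y ⟨z, hz, rfl⟩
    exact hmax z hz
  have hgmax : ∀ y ∈ Set.Icc a b, g y ≤ g xs := fun y hy =>
    pow_le_pow_left₀ (norm_nonneg _) (hmax y hy) 2
  obtain ⟨x₀, hx₀, hf0⟩ := hne
  have hIpos : 0 < ∫ x in a..b, g x :=
    integral_pos_aux a b hab g hg (fun x => by positivity) hx₀
      (pow_pos (norm_pos_iff.mpr hf0) 2)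
  have hA := sup_grid_tendsto_aux a b hab g hg hxs hgmax
  have hB := riemann_sum_tendsto_aux a b hab g hg
  have hB' : Filter.Tendsto
      (fun N : ℕ => (∑ k ∈ Finset.range N, g (a + k * (b - a) / N)) / N)
      Filter.atTop (𝓝 ((∫ x in a..b, g x) / (b - a))) := by
    refine (hB.div_const (b - a)).congr fun N => ?_
    rw [div_mul_eq_mul_div, mul_div_assoc, mul_div_cancel_left₀ _ (ne_of_gt hba)]
  have hC := hA.div hB' (ne_of_gt (div_pos hIpos hba))
  have hC' : Filter.Tendsto
      (fun N : ℕ => (N : ℝ) * (⨆ k : Fin N, g (a + k * (b - a) / N)) /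
        ∑ k ∈ Finset.range N, g (a + k * (b - a) / N))
      Filter.atTop (𝓝 ((b - a) * g xs / ∫ x in a..b, g x)) := by
    have hval : (b - a) * g xs / ∫ x in a..b, g x
        = g xs / ((∫ x in a..b, g x) / (b - a)) := by
      rw [div_div_eq_mul_div]; ring
    rw [hval]
    refine hC.congr fun N => ?_
    simp only [Pi.div_apply]
    rw [div_div_eq_mul_div]; ring
  rw [hsup]
  exact hC'
end

section
/- Let a < b be real numbers and let f : ℝ → ℝ be continuous and nonnegative on [a,b]. For each positive integer N and grid points x_k = a + k(b−a)/N (k = 0,…,N−1), the sequence N · max_{0 ≤ k < N} ∫_{x_k}^{x_k + (b−a)/N} f(x) dx converges, as N → ∞, to (b−a) · sup_{x ∈ [a,b]} f(x). -/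
open scoped Topology

set_option maxHeartbeats 800000 in
/-- For a continuous nonnegative `f` on `[a,b]`, the quantity
`N · max_k ∫_{x_k}^{x_k + Δ_N} f` on the uniform `N`-point grid converges to
`(b-a) · sup_{[a,b]} f`. -/
theorem integral_encoded_max_amplitude_tendsto
    (a b : ℝ) (hab : a < b) (f : ℝ → ℝ)
    (hf : ContinuousOn f (Set.Icc a b))
    (hpos : ∀ x ∈ Set.Icc a b, 0 ≤ f x) :
    Filter.Tendsto
      (fun N : ℕ =>
        (N : ℝ) *
          ⨆ k : Fin N,
            ∫ x in (a + k * (b - a) / N)..(a + k * (b - a) / N + (b - a) / N), f x)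
      Filter.atTop (𝓝 ((b - a) * sSup (f '' Set.Icc a b))) := by
  obtain ⟨x₀, hx₀, hmax⟩ := isCompact_Icc.exists_isMaxOn (Set.nonempty_Icc.2 hab.le) hf
  have hmax' : ∀ x ∈ Set.Icc a b, f x ≤ f x₀ := isMaxOn_iff.mp hmax
  have hM : sSup (f '' Set.Icc a b) = f x₀ :=
    IsGreatest.csSup_eq ⟨⟨x₀, hx₀, rfl⟩, by rintro y ⟨x, hx, rfl⟩; exact hmax' x hx⟩
  rw [hM]
  set M := f x₀ with hMdef
  rw [Metric.tendsto_atTop]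
  intro ε hε
  have hba : (0:ℝ) < b - a := by linarith
  set ε₁ := ε / (2 * (b - a)) with hε₁def
  have hε₁ : 0 < ε₁ := by positivity
  obtain ⟨δ, hδ, hδf⟩ := Metric.continuousWithinAt_iff.mp (hf x₀ hx₀) ε₁ hε₁
  obtain ⟨n, hn⟩ := exists_nat_gt ((b - a) / δ)
  refine ⟨max n 1, fun N hN => ?_⟩
  have hN1 : 1 ≤ N := le_trans (le_max_right n 1) hN
  have hNn : (n:ℝ) ≤ N := by exact_mod_cast le_trans (le_max_left n 1) hN
  have hNpos : (0:ℝ) < N := by exact_mod_cast hN1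
  set Δ := (b - a) / N with hΔdef
  have hΔpos : 0 < Δ := by positivity
  have hΔδ : Δ < δ := by
    rw [hΔdef, div_lt_iff₀ hNpos]
    have h1 : (b - a) / δ < N := lt_of_lt_of_le hn hNn
    rw [div_lt_iff₀ hδ] at h1
    linarith
  have hNΔ : (N:ℝ) * Δ = b - a := by
    rw [hΔdef]; field_simp
  have hgrid : ∀ k : Fin N, a + (k : ℝ) * (b - a) / (N : ℝ) = a + (k : ℝ) * Δ := by
    intro k; rw [hΔdef]; ring
  simp only [hgrid]
  have hsub : ∀ k : Fin N, Set.Icc (a + (k:ℝ) * Δ) (a + (k:ℝ) * Δ + Δ) ⊆ Set.Icc a b := by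
    intro k
    apply Set.Icc_subset_Icc
    · nlinarith [hΔpos.le, (Nat.cast_nonneg k.val : (0:ℝ) ≤ (k:ℕ))]
    · have hk : ((k:ℕ) : ℝ) + 1 ≤ N := by exact_mod_cast k.2
      nlinarith
  have hint : ∀ k : Fin N,
      IntervalIntegrable f MeasureTheory.volume (a + (k:ℝ)*Δ) (a + (k:ℝ)*Δ + Δ) := by
    intro k
    exact (hf.mono (by rw [Set.uIcc_of_le (by linarith)]; exact hsub k)).intervalIntegrable
  haveI : Nonempty (Fin N) := ⟨⟨0, hN1⟩⟩
  have hbdd : BddAbove (Set.range fun k : Fin N =>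
      ∫ x in (a + (k:ℝ)*Δ)..(a + (k:ℝ)*Δ + Δ), f x) :=
    (Set.finite_range _).bddAbove
  -- upper bound
  have hup : ∀ k : Fin N, (∫ x in (a + (k:ℝ)*Δ)..(a + (k:ℝ)*Δ + Δ), f x) ≤ Δ * M := by
    intro k
    have h1 : (∫ x in (a + (k:ℝ)*Δ)..(a + (k:ℝ)*Δ + Δ), f x)
        ≤ ∫ _x in (a + (k:ℝ)*Δ)..(a + (k:ℝ)*Δ + Δ), M :=
      intervalIntegral.integral_mono_on (by linarith) (hint k) intervalIntegrable_const
        (fun x hx => hmax' x (hsub k hx))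
    rwa [intervalIntegral.integral_const, smul_eq_mul,
      show a + (k:ℝ)*Δ + Δ - (a + (k:ℝ)*Δ) = Δ by ring] at h1
  have hS_ub : (⨆ k : Fin N, ∫ x in (a + (k:ℝ)*Δ)..(a + (k:ℝ)*Δ + Δ), f x) ≤ Δ * M :=
    ciSup_le hup
  -- choose the index containing x₀
  have hx₀a : a ≤ x₀ := hx₀.1
  have hx₀b : x₀ ≤ b := hx₀.2
  set m := ⌊(x₀ - a) / Δ⌋₊ with hmdef
  have hm_le : (m:ℝ) * Δ ≤ x₀ - a :=
    (le_div_iff₀ hΔpos).mp (Nat.floor_le (div_nonneg (by linarith) hΔpos.le))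
  set j := min m (N - 1) with hjdef
  have hjN : j < N := lt_of_le_of_lt (min_le_right _ _) (Nat.sub_lt (by omega) one_pos)
  have hj_le : (j:ℝ) * Δ ≤ x₀ - a := by
    have h1 : (j:ℝ) ≤ m := by exact_mod_cast min_le_left m (N-1)
    nlinarith
  have hj_ge : x₀ - a ≤ ((j:ℝ) + 1) * Δ := by
    rcases le_or_gt m (N-1) with h | h
    · have hjm : j = m := min_eq_left h
      have h2 : (x₀ - a) / Δ < (m:ℝ) + 1 := Nat.lt_floor_add_one _
      rw [div_lt_iff₀ hΔpos] at h2
      rw [hjm]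
      linarith
    · have hjm : j = N - 1 := min_eq_right h.le
      have h3 : ((j:ℝ) + 1) = N := by
        rw [hjm, Nat.cast_sub hN1, Nat.cast_one]; ring
      rw [h3]
      linarith [hNΔ]
  set jF : Fin N := ⟨j, hjN⟩ with hjF
  have hjFv : ((jF:ℕ):ℝ) = (j:ℝ) := rfl
  -- lower bound on the integral over the j-th interval
  have hlow : Δ * (M - ε₁) ≤ ∫ x in (a + (jF:ℝ)*Δ)..(a + (jF:ℝ)*Δ + Δ), f x := by
    have h1 : (∫ _x in (a + (jF:ℝ)*Δ)..(a + (jF:ℝ)*Δ + Δ), (M - ε₁))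
        ≤ ∫ x in (a + (jF:ℝ)*Δ)..(a + (jF:ℝ)*Δ + Δ), f x := by
      apply intervalIntegral.integral_mono_on (by linarith) intervalIntegrable_const (hint jF)
      intro x hx
      have hxab : x ∈ Set.Icc a b := hsub jF hx
      have hdist : dist x x₀ < δ := by
        rw [Real.dist_eq, abs_lt]
        have hx1 := hx.1
        have hx2 := hx.2
        rw [hjFv] at hx1 hx2
        constructor <;> nlinarith
      have := hδf hxab hdist
      rw [Real.dist_eq, abs_lt] at this
      linarith [this.1]
    rwa [intervalIntegral.integral_const, smul_eq_mul,
      show a + (jF:ℝ)*Δ + Δ - (a + (jF:ℝ)*Δ) = Δ by ring] at h1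
  have hS_lb : Δ * (M - ε₁)
      ≤ ⨆ k : Fin N, ∫ x in (a + (k:ℝ)*Δ)..(a + (k:ℝ)*Δ + Δ), f x :=
    le_trans hlow (le_ciSup hbdd jF)
  -- conclude
  have hhalf : (b - a) * ε₁ = ε / 2 := by
    rw [hε₁def]; field_simp
  have h1 : (N:ℝ) * (Δ * (M - ε₁)) = (b - a) * (M - ε₁) := by rw [← hNΔ]; ring
  have h2 : (N:ℝ) * (Δ * M) = (b - a) * M := by rw [← hNΔ]; ring
  have hl := mul_le_mul_of_nonneg_left hS_lb hNpos.le
  have hu := mul_le_mul_of_nonneg_left hS_ub hNpos.le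
  rw [Real.dist_eq, abs_lt]
  constructor
  · nlinarith
  · nlinarith
end

section
/- Let N be a positive integer and let A : Matrix (Fin N) (Fin N) ℂ be Hermitian. Define S_A : Matrix (Fin N × Fin N) (Fin N × Fin N) ℂ by S_A (p, q) (r, s) = A q p if q = r and p = s, and 0 otherwise (i.e. S_A = Σ_{j,k} A_{j k} · (|k⟩⟨j| ⊗ |j⟩⟨k|)). Then S_A is Hermitian and its ℓ²→ℓ² operator norm (spectral norm) equals ‖A‖_max = max_{j,k} |A_{j k}|. -/
open scoped Matrix.Norms.L2Operator
open Matrix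

/-- The one-sparse embedding `S_A = Σ_{j,k} A_{jk} |k⟩⟨j| ⊗ |j⟩⟨k|` of a Hermitian matrix `A`
is Hermitian, and its spectral norm equals `‖A‖_max = max_{j,k} |A_{jk}|`. -/
theorem one_sparse_embedding_isHermitian_and_norm_eq_max_entry
    (N : ℕ) (hN : 0 < N) (A : Matrix (Fin N) (Fin N) ℂ) (hA : A.IsHermitian)
    (S : Matrix (Fin N × Fin N) (Fin N × Fin N) ℂ)
    (hS : ∀ p q r s : Fin N,
      S (p, q) (r, s) = if q = r ∧ p = s then A q p else 0) :
    S.IsHermitian ∧ ‖S‖ = ⨆ j : Fin N, ⨆ k : Fin N, ‖A j k‖ := by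
  have hNe : Nonempty (Fin N) := ⟨⟨0, hN⟩⟩
  have hAconj : ∀ a b : Fin N, (starRingEnd ℂ) (A a b) = A b a := by
    intro a b
    have := congrFun (congrFun hA b) a
    simpa [Matrix.conjTranspose_apply] using this
  -- Hermitian-ness of S
  have hHerm : S.IsHermitian := by
    ext ⟨p, q⟩ ⟨r, s⟩
    rw [Matrix.conjTranspose_apply, hS, hS]
    by_cases h : q = r ∧ p = s
    · obtain ⟨h1, h2⟩ := h
      subst h1; subst h2
      rw [if_pos ⟨rfl, rfl⟩, if_pos ⟨rfl, rfl⟩]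
      exact hAconj p q
    · rw [if_neg h, if_neg (by rintro ⟨rfl, rfl⟩; exact h ⟨rfl, rfl⟩), star_zero]
  refine ⟨hHerm, ?_⟩
  set M : ℝ := ⨆ j : Fin N, ⨆ k : Fin N, ‖A j k‖ with hM
  have hle : ∀ a b : Fin N, ‖A a b‖ ≤ M := by
    intro a b
    refine le_trans (le_ciSup (f := fun k => ‖A a k‖)
      (Set.Finite.bddAbove (Set.finite_range _)) b) ?_
    exact le_ciSup (f := fun j => ⨆ k, ‖A j k‖)
      (Set.Finite.bddAbove (Set.finite_range _)) a
  have hM0 : 0 ≤ M := le_trans (norm_nonneg _) (hle ⟨0, hN⟩ ⟨0, hN⟩)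
  -- computation of mulVec
  have hmul : ∀ (x : Fin N × Fin N → ℂ) (p q : Fin N),
      (S *ᵥ x) (p, q) = A q p * x (q, p) := by
    intro x p q
    have key : ∀ y : Fin N × Fin N, S (p, q) y * x y
        = if (q, p) = y then A q p * x y else 0 := by
      rintro ⟨r, s⟩
      rw [hS]
      by_cases h : q = r ∧ p = s
      · obtain ⟨h1, h2⟩ := h
        subst h1; subst h2
        simp
      · rw [if_neg h, if_neg (by simpa [Prod.ext_iff] using h), zero_mul]
    have : (S *ᵥ x) (p, q) = ∑ y : Fin N × Fin N, S (p, q) y * x y := rfl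
    rw [this, Finset.sum_congr rfl (fun y _ => key y), Finset.sum_ite_eq]
    simp
  -- upper bound
  have upper : ‖S‖ ≤ M := by
    rw [Matrix.l2_opNorm_def]
    refine ContinuousLinearMap.opNorm_le_bound _ hM0 ?_
    intro x
    have happ : ((Matrix.toEuclideanLin.trans LinearMap.toContinuousLinearMap) S) x
        = (WithLp.equiv 2 _).symm (S *ᵥ (WithLp.equiv 2 _) x) := rfl
    rw [happ]
    have hx : 0 ≤ ‖x‖ := norm_nonneg _
    rw [EuclideanSpace.norm_eq]
    have hMx : M * ‖x‖ = Real.sqrt (M ^ 2 * ‖x‖ ^ 2) := by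
      rw [Real.sqrt_mul (sq_nonneg M), Real.sqrt_sq hM0, Real.sqrt_sq hx]
    rw [hMx]
    apply Real.sqrt_le_sqrt
    have hsum : ∑ i : Fin N × Fin N,
        ‖((WithLp.equiv 2 _).symm (S *ᵥ (WithLp.equiv 2 _) x)) i‖ ^ 2
        = ∑ i : Fin N × Fin N, ‖A i.2 i.1 * x i.swap‖ ^ 2 := by
      refine Finset.sum_congr rfl ?_
      rintro ⟨p, q⟩ _
      congr 1
      exact congrArg norm (hmul _ p q)
    rw [hsum]
    have hbound : ∀ i : Fin N × Fin N,
        ‖A i.2 i.1 * x i.swap‖ ^ 2 ≤ M ^ 2 * ‖x i.swap‖ ^ 2 := by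
      intro i
      rw [norm_mul, mul_pow]
      exact mul_le_mul_of_nonneg_right
        (pow_le_pow_left₀ (norm_nonneg _) (hle i.2 i.1) 2) (sq_nonneg _)
    calc ∑ i : Fin N × Fin N, ‖A i.2 i.1 * x i.swap‖ ^ 2
        ≤ ∑ i : Fin N × Fin N, M ^ 2 * ‖x i.swap‖ ^ 2 :=
          Finset.sum_le_sum (fun i _ => hbound i)
      _ = M ^ 2 * ∑ i : Fin N × Fin N, ‖x i.swap‖ ^ 2 := by rw [Finset.mul_sum]
      _ = M ^ 2 * ∑ i : Fin N × Fin N, ‖x i‖ ^ 2 := by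
          congr 1
          exact Fintype.sum_equiv (Equiv.prodComm _ _) _ _ (fun i => rfl)
      _ = M ^ 2 * ‖x‖ ^ 2 := by
          congr 1
          rw [EuclideanSpace.norm_eq, Real.sq_sqrt]
          positivity
  -- lower bound
  have lower : M ≤ ‖S‖ := by
    obtain ⟨⟨j, k⟩, hjk⟩ := Finite.exists_max (fun p : Fin N × Fin N => ‖A p.1 p.2‖)
    have hMeq : M = ‖A j k‖ := by
      refine le_antisymm ?_ (hle j k)
      exact ciSup_le fun a => ciSup_le fun b => hjk (a, b)
    set e : EuclideanSpace ℂ (Fin N × Fin N) := EuclideanSpace.single (k, j) 1 with he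
    have hmve : (WithLp.equiv 2 _).symm (S *ᵥ (WithLp.equiv 2 _) e)
        = EuclideanSpace.single (j, k) (A k j) := by
      ext ⟨p, q⟩
      have : (S *ᵥ (WithLp.equiv 2 _) e) (p, q) = A q p * e (q, p) := hmul _ p q
      rw [show ((WithLp.equiv 2 _).symm (S *ᵥ (WithLp.equiv 2 _) e)) (p, q)
          = (S *ᵥ (WithLp.equiv 2 _) e) (p, q) from rfl, this]
      by_cases h : p = j ∧ q = k
      · obtain ⟨h1, h2⟩ := h; subst h1; subst h2
        simp [he, EuclideanSpace.single_apply]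
      · have h1 : (q, p) ≠ (k, j) := by simp [Prod.ext_iff]; tauto
        have h2 : ((p, q) : Fin N × Fin N) ≠ (j, k) := by simp [Prod.ext_iff]; tauto
        simp [he, EuclideanSpace.single_apply, h1, h2]
    have hnorm := Matrix.l2_opNorm_mulVec S e
    rw [show (EuclideanSpace.equiv (Fin N × Fin N) ℂ).symm (S *ᵥ e)
        = (WithLp.equiv 2 _).symm (S *ᵥ (WithLp.equiv 2 _) e) from rfl, hmve] at hnorm
    rw [EuclideanSpace.norm_single, he, EuclideanSpace.norm_single, norm_one, mul_one] at hnorm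
    have : ‖A k j‖ = ‖A j k‖ := by
      rw [← hAconj j k, RCLike.norm_conj]
    rw [this, ← hMeq] at hnorm
    exact hnorm
  exact le_antisymm upper lower
end
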